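/- Let M > 0, H ∈ ℝ, c > -8M^3 H, and define for r ∈ (2M, ∞) the function f̃'(r) = -r^4 / ((H r^3 + c)^2 + r^3(r - 2M) + (H r^3 + c)√((H r^3 + c)^2 + r^3(r - 2M))). Then f̃'(r) < 0 for all r ∈ (2M, ∞) near 2M, and the denominator at r = 2M equals 2(8M^3 H + c)^2 > 0, so f̃' extends continuously to r = 2M. -/
import Mathlib


/-- For `c > -8M³H`, the function
`f̃'(r) = -r⁴ / ((Hr³+c)² + r³(r-2M) + (Hr³+c)√((Hr³+c)² + r³(r-2M)))` is negative
near `r = 2M` in `(2M, ∞)`, its denominator at `r = 2M` equals `2(8M³H + c)² > 0`,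
and `f̃'` extends continuously to `r = 2M`. -/
theorem stmt8 (M H c : ℝ) (hM : 0 < M) (hc : -(8 * M ^ 3 * H) < c) :
    (∀ᶠ r in nhdsWithin (2 * M) (Set.Ioi (2 * M)),
      -r ^ 4 / ((H * r ^ 3 + c) ^ 2 + r ^ 3 * (r - 2 * M)
          + (H * r ^ 3 + c) * Real.sqrt ((H * r ^ 3 + c) ^ 2 + r ^ 3 * (r - 2 * M))) < 0) ∧
    ((H * (2 * M) ^ 3 + c) ^ 2 + (2 * M) ^ 3 * (2 * M - 2 * M)
        + (H * (2 * M) ^ 3 + c) *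
            Real.sqrt ((H * (2 * M) ^ 3 + c) ^ 2 + (2 * M) ^ 3 * (2 * M - 2 * M))
      = 2 * (8 * M ^ 3 * H + c) ^ 2) ∧
    0 < 2 * (8 * M ^ 3 * H + c) ^ 2 ∧
    Filter.Tendsto (fun r : ℝ => -r ^ 4 / ((H * r ^ 3 + c) ^ 2 + r ^ 3 * (r - 2 * M)
        + (H * r ^ 3 + c) * Real.sqrt ((H * r ^ 3 + c) ^ 2 + r ^ 3 * (r - 2 * M))))
      (nhdsWithin (2 * M) (Set.Ioi (2 * M)))
      (nhds (-(2 * M) ^ 4 / (2 * (8 * M ^ 3 * H + c) ^ 2))) := by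
  have ha : 0 < 8 * M ^ 3 * H + c := by linarith
  have ha' : H * (2 * M) ^ 3 + c = 8 * M ^ 3 * H + c := by ring
  have hval : (H * (2 * M) ^ 3 + c) ^ 2 + (2 * M) ^ 3 * (2 * M - 2 * M)
        + (H * (2 * M) ^ 3 + c) *
            Real.sqrt ((H * (2 * M) ^ 3 + c) ^ 2 + (2 * M) ^ 3 * (2 * M - 2 * M))
      = 2 * (8 * M ^ 3 * H + c) ^ 2 := by
    rw [ha']
    have : (8 * M ^ 3 * H + c) ^ 2 + (2 * M) ^ 3 * (2 * M - 2 * M)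
        = (8 * M ^ 3 * H + c) ^ 2 := by ring
    rw [this, Real.sqrt_sq ha.le]; ring
  have hpos : 0 < 2 * (8 * M ^ 3 * H + c) ^ 2 := by positivity
  have hcontA : ContinuousAt (fun r : ℝ => H * r ^ 3 + c) (2 * M) := by fun_prop
  -- eventually H*r^3+c > 0
  have h1 : ∀ᶠ r in nhdsWithin (2 * M) (Set.Ioi (2 * M)), 0 < H * r ^ 3 + c := by
    have : ∀ᶠ r in nhds (2 * M), 0 < H * r ^ 3 + c := by
      have h0 : 0 < H * (2 * M) ^ 3 + c := by rw [ha']; exact ha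
      exact hcontA.eventually (eventually_gt_nhds h0)
    exact this.filter_mono nhdsWithin_le_nhds
  have h2 : ∀ᶠ r in nhdsWithin (2 * M) (Set.Ioi (2 * M)), 2 * M < r :=
    eventually_mem_nhdsWithin
  have hev : ∀ᶠ r in nhdsWithin (2 * M) (Set.Ioi (2 * M)),
      -r ^ 4 / ((H * r ^ 3 + c) ^ 2 + r ^ 3 * (r - 2 * M)
          + (H * r ^ 3 + c) * Real.sqrt ((H * r ^ 3 + c) ^ 2 + r ^ 3 * (r - 2 * M))) < 0 := by
    filter_upwards [h1, h2] with r hr1 hr2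
    have hr0 : 0 < r := by linarith
    have hA : 0 < (H * r ^ 3 + c) ^ 2 + r ^ 3 * (r - 2 * M) := by
      have : 0 < r ^ 3 * (r - 2 * M) := mul_pos (pow_pos hr0 3) (by linarith)
      nlinarith [sq_nonneg (H * r ^ 3 + c)]
    have hden : 0 < (H * r ^ 3 + c) ^ 2 + r ^ 3 * (r - 2 * M)
        + (H * r ^ 3 + c) * Real.sqrt ((H * r ^ 3 + c) ^ 2 + r ^ 3 * (r - 2 * M)) := by
      have hs : 0 ≤ Real.sqrt ((H * r ^ 3 + c) ^ 2 + r ^ 3 * (r - 2 * M)) := Real.sqrt_nonneg _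
      nlinarith
    have hnum : -r ^ 4 < 0 := neg_neg_of_pos (by positivity)
    exact div_neg_of_neg_of_pos hnum hden
  refine ⟨hev, hval, hpos, ?_⟩
  have hcont : ContinuousAt (fun r : ℝ => -r ^ 4 / ((H * r ^ 3 + c) ^ 2 + r ^ 3 * (r - 2 * M)
        + (H * r ^ 3 + c) * Real.sqrt ((H * r ^ 3 + c) ^ 2 + r ^ 3 * (r - 2 * M)))) (2 * M) := by
    apply ContinuousAt.div
    · fun_prop
    · fun_prop
    · rw [hval]; exact hpos.ne'
  have h := hcont.continuousWithinAt (s := Set.Ioi (2 * M))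
  unfold ContinuousWithinAt at h
  rw [← hval]
  exact h
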